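/- In a finite MDP, a memoryless policy whose reached set C avoids AVOID, is closed under successors, and admits a ranking function (every non-REACH state in C has a successor of strictly smaller rank) reaches REACH with probability 1 from every state in C. -/

import Mathlib

open scoped ENNReal Classical

/-- Probability that the Markov chain induced by a memoryless policy `σ` on an
MDP with transitions `P` reaches `T` within `n` steps from `s`. -/
noncomputable def mcReachN {S : Type} (K : S → PMF S) (T : Set S) :
    ℕ → S → ℝ≥0∞
  | 0, s => if s ∈ T then 1 else 0
  | n + 1, s => if s ∈ T then 1 else ∑' t : S, K s t * mcReachN K T n t

/-- Probability of eventually reaching `T` from `s`. -/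
noncomputable def mcReach {S : Type} (K : S → PMF S) (T : Set S) (s : S) : ℝ≥0∞ :=
  ⨆ n, mcReachN K T n s

section Aux

variable {S : Type} [Fintype S] (K : S → PMF S) (T : Set S)

lemma mcReachN_mono : ∀ n, ∀ s, mcReachN K T n s ≤ mcReachN K T (n + 1) s := by
  intro n
  induction n with
  | zero =>
    intro s
    by_cases h : s ∈ T <;> simp [mcReachN, h]
  | succ n ih =>
    intro s
    by_cases h : s ∈ T
    · simp [mcReachN, h]
    · simp only [mcReachN, if_neg h]
      exact ENNReal.tsum_le_tsum fun t => mul_le_mul_right (ih t) _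

lemma mcReachN_monotone (s : S) : Monotone fun n => mcReachN K T n s :=
  monotone_nat_of_le_succ fun n => mcReachN_mono K T n s

lemma mcReachN_le_one : ∀ n, ∀ s, mcReachN K T n s ≤ 1 := by
  intro n
  induction n with
  | zero =>
    intro s
    by_cases h : s ∈ T <;> simp [mcReachN, h]
  | succ n ih =>
    intro s
    by_cases h : s ∈ T
    · simp [mcReachN, h]
    · simp only [mcReachN, if_neg h]
      calc ∑' t : S, K s t * mcReachN K T n t
          ≤ ∑' t : S, K s t * 1 :=
            ENNReal.tsum_le_tsum fun t => mul_le_mul_right (ih t) _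
        _ = 1 := by simp only [mul_one]; exact (K s).tsum_coe

lemma mcReach_le_one (s : S) : mcReach K T s ≤ 1 :=
  iSup_le fun n => mcReachN_le_one K T n s

lemma mcReach_of_mem {s : S} (h : s ∈ T) : mcReach K T s = 1 :=
  le_antisymm (mcReach_le_one K T s)
    (le_trans (by simp [mcReachN, h]) (le_iSup (fun n => mcReachN K T n s) 0))

lemma mcReach_step {s : S} (h : s ∉ T) :
    mcReach K T s = ∑ t : S, K s t * mcReach K T t := by
  have h1 : mcReach K T s = ⨆ n, mcReachN K T (n + 1) s := by
    refine le_antisymm (iSup_le fun n => ?_)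
      (iSup_le fun n => le_iSup (fun n => mcReachN K T n s) (n + 1))
    exact le_trans (mcReachN_mono K T n s) (le_iSup (fun n => mcReachN K T (n + 1) s) n)
  have h2 : ∀ n, mcReachN K T (n + 1) s = ∑ t : S, K s t * mcReachN K T n t := by
    intro n
    simp [mcReachN, if_neg h, tsum_fintype]
  rw [h1]
  simp_rw [h2]
  rw [← ENNReal.finsetSum_iSup_of_monotone
    (f := fun t n => K s t * mcReachN K T n t)
    (fun t => fun i j hij => mul_le_mul_right (mcReachN_monotone K T t hij) _)]
  congr 1
  funext t
  rw [mcReach, ENNReal.mul_iSup]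

end Aux

/-- In a finite MDP, a memoryless policy whose reached set `C`
avoids AVOID, is closed under successors, and admits a ranking function reaches
REACH with probability 1 from every state in `C`. -/
theorem ranking_implies_as_reach {S Act : Type} [Fintype S] [Fintype Act]
    (P : S → Act → PMF S) (REACH AVOID : Set S)
    (hdisj : Disjoint REACH AVOID)
    (hR : ∀ s ∈ REACH, ∀ α, P s α = PMF.pure s)
    (hA : ∀ s ∈ AVOID, ∀ α, P s α = PMF.pure s)
    (σ : S → Act) (C : Set S)
    (havoid : C ∩ AVOID = ∅)
    (hclosed : ∀ s ∈ C, ∀ s', P s (σ s) s' ≠ 0 → s' ∈ C)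
    (r : S → ℝ)
    (hrank : ∀ s ∈ C, s ∉ REACH → ∃ s', P s (σ s) s' ≠ 0 ∧ r s > r s') :
    ∀ s ∈ C, mcReach (fun t => P t (σ t)) REACH s = 1 := by
  intro s hs
  set K : S → PMF S := fun t => P t (σ t) with hK
  set f : S → ℝ≥0∞ := mcReach K REACH with hf
  have hCfin : C.Finite := Set.toFinite C
  have hsF : s ∈ hCfin.toFinset := hCfin.mem_toFinset.2 hs
  obtain ⟨s1, hs1, hmin⟩ := hCfin.toFinset.exists_min_image f ⟨s, hsF⟩
  set m : ℝ≥0∞ := f s1 with hm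
  have hm_le : ∀ t ∈ C, m ≤ f t := fun t ht => hmin t (hCfin.mem_toFinset.2 ht)
  have hm_le_one : m ≤ 1 := mcReach_le_one K REACH s1
  set A : Finset S := hCfin.toFinset.filter (fun t => f t = m) with hA'
  have hAne : A.Nonempty := ⟨s1, Finset.mem_filter.2 ⟨hs1, rfl⟩⟩
  obtain ⟨s2, hs2A, hrmin⟩ := A.exists_min_image r hAne
  have hs2C : s2 ∈ C := hCfin.mem_toFinset.1 (Finset.mem_filter.1 hs2A).1
  have hs2m : f s2 = m := (Finset.mem_filter.1 hs2A).2
  by_cases hsR : s2 ∈ REACH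
  · -- m = 1, so f s = 1
    have hm1 : m = 1 := by rw [← hs2m, hf]; exact mcReach_of_mem K REACH hsR
    exact le_antisymm (mcReach_le_one K REACH s) (hm1 ▸ hm_le s hs)
  · exfalso
    obtain ⟨s', hKs', hr⟩ := hrank s2 hs2C hsR
    have hs'C : s' ∈ C := hclosed s2 hs2C s' hKs'
    have hs'm : f s' = m := by
      by_contra hne'
      have hlt : m < f s' := lt_of_le_of_ne (hm_le s' hs'C) (Ne.symm hne')
      have hfp : f s2 = ∑ t : S, K s2 t * f t := mcReach_step K REACH hsR
      have hsplit : ∑ t : S, K s2 t * f t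
          = K s2 s' * f s' + ∑ t ∈ Finset.univ.erase s', K s2 t * f t :=
        (Finset.add_sum_erase _ _ (Finset.mem_univ s')).symm
      have hsumK : K s2 s' + ∑ t ∈ Finset.univ.erase s', K s2 t = 1 := by
        rw [Finset.add_sum_erase _ _ (Finset.mem_univ s'), ← tsum_fintype (L := SummationFilter.unconditional S)]
        exact (K s2).tsum_coe
      have hge : (∑ t ∈ Finset.univ.erase s', K s2 t) * m
          ≤ ∑ t ∈ Finset.univ.erase s', K s2 t * f t := by
        rw [Finset.sum_mul]
        refine Finset.sum_le_sum fun t _ => ?_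
        by_cases hKt : K s2 t = 0
        · simp [hKt]
        · exact mul_le_mul_right (hm_le t (hclosed s2 hs2C t hKt)) _
      have hfin : (∑ t ∈ Finset.univ.erase s', K s2 t * f t) ≠ ∞ := by
        refine ne_top_of_le_ne_top (by simp : (1 : ℝ≥0∞) ≠ ∞) ?_
        calc ∑ t ∈ Finset.univ.erase s', K s2 t * f t
            ≤ ∑ t ∈ Finset.univ.erase s', K s2 t :=
              Finset.sum_le_sum fun t _ =>
                (mul_le_mul_right (mcReach_le_one K REACH t) _).trans (by simp)
          _ ≤ 1 := le_add_self.trans hsumK.le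
      have hKne : K s2 s' ≠ ∞ := (K s2).apply_ne_top s'
      have hstrict : m < f s2 := by
        calc m = m * 1 := (mul_one m).symm
          _ = m * (K s2 s' + ∑ t ∈ Finset.univ.erase s', K s2 t) := by rw [hsumK]
          _ = K s2 s' * m + (∑ t ∈ Finset.univ.erase s', K s2 t) * m := by ring
          _ < K s2 s' * f s' + (∑ t ∈ Finset.univ.erase s', K s2 t) * m := by
              refine ENNReal.add_lt_add_right ?_ (ENNReal.mul_lt_mul_iff_right hKs' hKne |>.2 hlt)
              exact ENNReal.mul_ne_top (ne_top_of_le_ne_top (by simp) (le_add_self.trans hsumK.le)) (ne_top_of_le_ne_top (by simp) hm_le_one)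
          _ ≤ K s2 s' * f s' + ∑ t ∈ Finset.univ.erase s', K s2 t * f t :=
              add_le_add le_rfl hge
          _ = f s2 := by rw [hfp, hsplit]
      exact absurd (hs2m ▸ hstrict) (lt_irrefl m)
    have hs'A : s' ∈ A := Finset.mem_filter.2 ⟨hCfin.mem_toFinset.2 hs'C, hs'm⟩
    exact absurd (hrmin s' hs'A) (not_le.2 hr)
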